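/- arXiv:2403.09440 — 5 statements merged into one kernel-verified Lean document; each statement's English description precedes it below -/
import Mathlib

section
/- Let f, g ∈ ℚ[T] be coprime polynomials with g nonzero. If there exist infinitely many integers t such that f(t)/g(t) ∈ ℤ, then g is a constant polynomial. -/
open Polynomial

theorem stmt_0 (f g : Polynomial ℚ) (hco : IsCoprime f g) (hg : g ≠ 0)
    (h : {t : ℤ | Polynomial.eval (t : ℚ) g ≠ 0 ∧
        ∃ k : ℤ, Polynomial.eval (t : ℚ) f / Polynomial.eval (t : ℚ) g = (k : ℚ)}.Infinite) :
    g.natDegree = 0 := by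
  classical
  obtain ⟨a, b, hab⟩ := hco
  obtain ⟨⟨ca, hca⟩, hA⟩ := IsLocalization.integerNormalization_map_to_map (nonZeroDivisors ℤ) a
  obtain ⟨⟨cb, hcb⟩, hB⟩ := IsLocalization.integerNormalization_map_to_map (nonZeroDivisors ℤ) b
  obtain ⟨⟨cg, hcg⟩, hG⟩ := IsLocalization.integerNormalization_map_to_map (nonZeroDivisors ℤ) g
  set A := IsLocalization.integerNormalization (nonZeroDivisors ℤ) a with hAdef
  set B := IsLocalization.integerNormalization (nonZeroDivisors ℤ) b with hBdef
  set G := IsLocalization.integerNormalization (nonZeroDivisors ℤ) g with hGdef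
  have hca0 : ca ≠ 0 := mem_nonZeroDivisors_iff_ne_zero.mp hca
  have hcb0 : cb ≠ 0 := mem_nonZeroDivisors_iff_ne_zero.mp hcb
  have hcg0 : cg ≠ 0 := mem_nonZeroDivisors_iff_ne_zero.mp hcg
  set N : ℤ := ca * cb * cg with hNdef
  have hN : N ≠ 0 := by positivity
  set S := {t : ℤ | Polynomial.eval (t : ℚ) g ≠ 0 ∧
        ∃ k : ℤ, Polynomial.eval (t : ℚ) f / Polynomial.eval (t : ℚ) g = (k : ℚ)} with hSdef
  -- evaluation facts
  have evalA : ∀ t : ℤ, ((A.eval t : ℤ) : ℚ) = ca * a.eval (t : ℚ) := by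
    intro t
    have := eval_intCast_map (algebraMap ℤ ℚ) A t
    rw [hA] at this
    simpa [zsmul_eq_mul] using this.symm
  have evalB : ∀ t : ℤ, ((B.eval t : ℤ) : ℚ) = cb * b.eval (t : ℚ) := by
    intro t
    have := eval_intCast_map (algebraMap ℤ ℚ) B t
    rw [hB] at this
    simpa [zsmul_eq_mul] using this.symm
  have evalG : ∀ t : ℤ, ((G.eval t : ℤ) : ℚ) = cg * g.eval (t : ℚ) := by
    intro t
    have := eval_intCast_map (algebraMap ℤ ℚ) G t
    rw [hG] at this
    simpa [zsmul_eq_mul] using this.symm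
  have hdvd : ∀ t ∈ S, G.eval t ∣ N := by
    rintro t ⟨hgt, k, hk⟩
    have hf : f.eval (t : ℚ) = k * g.eval (t : ℚ) := by
      field_simp at hk
      linarith [hk]
    have h1 : a.eval (t : ℚ) * f.eval (t : ℚ) + b.eval (t : ℚ) * g.eval (t : ℚ) = 1 := by
      have := congrArg (Polynomial.eval (t : ℚ)) hab
      simpa using this
    refine ⟨k * cb * A.eval t + ca * B.eval t, ?_⟩
    have : ((ca * cb * cg : ℤ) : ℚ) = ((G.eval t : ℤ) : ℚ) * ((k * cb * A.eval t + ca * B.eval t : ℤ) : ℚ) := by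
      push_cast
      rw [evalA, evalB, evalG]
      push_cast
      linear_combination (-((ca : ℚ) * cb * cg)) * h1 + ((ca : ℚ) * cb * cg * a.eval (t : ℚ)) * hf
    rw [hNdef]
    exact_mod_cast this
  -- pigeonhole
  have hT : Set.Finite {d : ℤ | d ∣ N} := by
    apply Set.Finite.subset (Set.finite_Icc (-|N|) |N|)
    intro d hd
    have h1 : |d| ∣ |N| := (abs_dvd _ _).mpr ((dvd_abs _ _).mpr hd)
    have h2 : |d| ≤ |N| := Int.le_of_dvd (abs_pos.mpr hN) h1
    simpa [Set.mem_Icc] using abs_le.mp h2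
  have hfib : ∃ d : ℤ, {t | t ∈ S ∧ G.eval t = d}.Infinite := by
    by_contra hc
    push_neg at hc
    have hsub : S ⊆ ⋃ d ∈ {d : ℤ | d ∣ N}, {t | t ∈ S ∧ G.eval t = d} := by
      intro t ht
      exact Set.mem_biUnion (hdvd t ht) ⟨ht, rfl⟩
    exact h (Set.Finite.subset (Set.Finite.biUnion hT fun d _ => hc d) hsub)
  obtain ⟨d, hd⟩ := hfib
  have hGC : G = C d := by
    have hz : G - C d = 0 := by
      apply Polynomial.eq_zero_of_infinite_isRoot
      apply hd.mono
      rintro t ⟨_, ht⟩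
      simp [Polynomial.IsRoot, ht]
    linear_combination hz
  have hgC : (cg : ℚ) • g = C (d : ℚ) := by
    rw [Int.cast_smul_eq_zsmul, ← hG, hGC]
    simp
  have hcgq : (cg : ℚ) ≠ 0 := Int.cast_ne_zero.mpr hcg0
  have hgeq : g = (cg : ℚ)⁻¹ • C (d : ℚ) := by
    rw [← hgC, smul_smul, inv_mul_cancel₀ hcgq, one_smul]
  rw [hgeq, Polynomial.smul_C, natDegree_C]
end

section
/- Let A be a nonzero rational number, ℓ an odd positive integer, and x, y ∈ ℚ[t] polynomials that take integer values at infinitely many positive integers and infinitely many negative integers. If F ∈ ℚ[X,Y] satisfies F(x(t), y(t)) = (1/A)·t^ℓ for all t, then F takes a negative value at some integer point, i.e., there exist a, b ∈ ℤ with F(a,b) < 0. In particular the image F(ℤ×ℤ) is not contained in ℕ. -/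
theorem stmt_4 (A : ℚ) (hA : A ≠ 0) (ℓ : ℕ) (hodd : Odd ℓ) (hℓ : 1 ≤ ℓ)
    (x y : Polynomial ℚ)
    (hpos : {t : ℤ | 0 < t ∧ (∃ a : ℤ, Polynomial.eval (t : ℚ) x = (a : ℚ)) ∧
        (∃ b : ℤ, Polynomial.eval (t : ℚ) y = (b : ℚ))}.Infinite)
    (hneg : {t : ℤ | t < 0 ∧ (∃ a : ℤ, Polynomial.eval (t : ℚ) x = (a : ℚ)) ∧
        (∃ b : ℤ, Polynomial.eval (t : ℚ) y = (b : ℚ))}.Infinite)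
    (F : MvPolynomial (Fin 2) ℚ)
    (hF : ∀ t : ℚ, MvPolynomial.eval ![Polynomial.eval t x, Polynomial.eval t y] F = t ^ ℓ / A) :
    (∃ a b : ℤ, MvPolynomial.eval ![(a : ℚ), (b : ℚ)] F < 0) ∧
      ¬ ({q : ℚ | ∃ a b : ℤ, MvPolynomial.eval ![(a : ℚ), (b : ℚ)] F = q} ⊆
          {q : ℚ | ∃ m : ℕ, q = (m : ℚ)}) := by
  have key : ∃ a b : ℤ, MvPolynomial.eval ![(a : ℚ), (b : ℚ)] F < 0 := by
    rcases lt_or_gt_of_ne hA with hAneg | hApos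
    · obtain ⟨t, ht, ⟨a, ha⟩, ⟨b, hb⟩⟩ := hpos.nonempty
      refine ⟨a, b, ?_⟩
      have h := hF (t : ℚ)
      rw [ha, hb] at h
      rw [h]
      exact div_neg_of_pos_of_neg (pow_pos (by exact_mod_cast ht) ℓ) hAneg
    · obtain ⟨t, ht, ⟨a, ha⟩, ⟨b, hb⟩⟩ := hneg.nonempty
      refine ⟨a, b, ?_⟩
      have h := hF (t : ℚ)
      rw [ha, hb] at h
      rw [h]
      exact div_neg_of_neg_of_pos (hodd.pow_neg (by exact_mod_cast ht)) hApos
  refine ⟨key, fun hsub => ?_⟩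
  obtain ⟨a, b, hab⟩ := key
  obtain ⟨m, hm⟩ := hsub ⟨a, b, rfl⟩
  rw [hm] at hab
  exact absurd hab (not_lt.2 (by positivity))
end

section
/- Let R ⊆ ℚ² be weakly approximating and p ∈ ℚ[X] a polynomial. Then the image of R under the map (x, y) ↦ (x, y + p(x)) is also weakly approximating. -/
def WeakApprox (R : Set (ℚ × ℚ)) : Prop :=
  ∀ (x₀ y₀ : ℚ) (N : ℕ), 1 ≤ N → ∃ p ∈ R,
    (∃ k : ℤ, p.1 - x₀ = (N : ℚ) * k) ∧ (∃ k : ℤ, p.2 - y₀ = (N : ℚ) * k)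

lemma good (p : Polynomial ℚ) :
    ∀ (x₀ : ℚ) (N : ℕ), 1 ≤ N → ∃ B : ℕ, 1 ≤ B ∧ ∀ k : ℤ, ∃ t : ℤ,
      p.eval (x₀ + (N : ℚ) * B * k) - p.eval x₀ = N * t := by
  induction p using Polynomial.induction_on with
  | C a => exact fun x₀ N hN => ⟨1, le_refl 1, fun k => ⟨0, by simp⟩⟩
  | add p q hp hq =>
    intro x₀ N hN
    obtain ⟨B₁, hB₁, h₁⟩ := hp x₀ N hN
    obtain ⟨B₂, hB₂, h₂⟩ := hq x₀ N hN
    refine ⟨B₁ * B₂, Nat.one_le_iff_ne_zero.2 (by positivity), fun k => ?_⟩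
    obtain ⟨t₁, ht₁⟩ := h₁ ((B₂ : ℤ) * k)
    obtain ⟨t₂, ht₂⟩ := h₂ ((B₁ : ℤ) * k)
    rw [show x₀ + (N : ℚ) * B₁ * (((B₂ : ℤ) * k : ℤ) : ℚ)
        = x₀ + (N : ℚ) * ((B₁ * B₂ : ℕ) : ℚ) * k by push_cast; ring] at ht₁
    rw [show x₀ + (N : ℚ) * B₂ * (((B₁ : ℤ) * k : ℤ) : ℚ)
        = x₀ + (N : ℚ) * ((B₁ * B₂ : ℕ) : ℚ) * k by push_cast; ring] at ht₂
    refine ⟨t₁ + t₂, ?_⟩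
    simp only [Polynomial.eval_add]
    push_cast
    push_cast at ht₁ ht₂
    linear_combination ht₁ + ht₂
  | monomial n a ih =>
    intro x₀ N hN
    have he1 : 0 < x₀.den := x₀.pos
    obtain ⟨B₀, hB₀, h₀⟩ := ih x₀ (N * x₀.den)
      (Nat.one_le_iff_ne_zero.2 (by positivity))
    set e := x₀.den with hee
    set d := (a * x₀ ^ n).den with hdd
    have hd1 : 0 < d := (a * x₀ ^ n).pos
    refine ⟨B₀ * e * d, Nat.one_le_iff_ne_zero.2 (by positivity), fun k => ?_⟩
    obtain ⟨t, ht⟩ := h₀ ((d : ℤ) * k)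
    rw [show x₀ + ((N * e : ℕ) : ℚ) * B₀ * (((d : ℤ) * k : ℤ) : ℚ)
        = x₀ + (N : ℚ) * ((B₀ * e * d : ℕ) : ℚ) * k by push_cast; ring] at ht
    simp only [Polynomial.eval_mul, Polynomial.eval_pow, Polynomial.eval_C,
      Polynomial.eval_X] at ht ⊢
    have hnum1 : (x₀.num : ℚ) = x₀ * e := by
      rw [hee]; field_simp [Rat.num_div_den]; exact (Rat.mul_den_eq_num _).symm
    have hnum2 : ((a * x₀ ^ n).num : ℚ) = a * x₀ ^ n * d := by
      rw [hdd]; field_simp [Rat.num_div_den]; exact (Rat.mul_den_eq_num _).symm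
    refine ⟨x₀.num * t + (N : ℤ) * (B₀ * e * d) * k * e * t + (a * x₀ ^ n).num * (B₀ * e) * k, ?_⟩
    push_cast at ht ⊢
    linear_combination (x₀ + (N : ℚ) * ((B₀ : ℚ) * e * d) * k) * ht - (N : ℚ) * t * hnum1
      - (N : ℚ) * B₀ * e * k * hnum2

theorem stmt_7 (R : Set (ℚ × ℚ)) (hR : WeakApprox R) (p : Polynomial ℚ) :
    WeakApprox ((fun q : ℚ × ℚ => (q.1, q.2 + Polynomial.eval q.1 p)) '' R) := by
  intro x₀ y₀ N hN
  obtain ⟨B, hB, hgood⟩ := good p x₀ N hN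
  obtain ⟨⟨x, y⟩, hxyR, ⟨k₁, hk₁⟩, ⟨k₂, hk₂⟩⟩ :=
    hR x₀ (y₀ - p.eval x₀) (N * B) (Nat.one_le_iff_ne_zero.2 (by positivity))
  have hx : x = x₀ + (N : ℚ) * B * k₁ := by push_cast at hk₁ ⊢; linarith
  obtain ⟨t, ht⟩ := hgood k₁
  rw [← hx] at ht
  refine ⟨(x, y + p.eval x), ⟨⟨x, y⟩, hxyR, rfl⟩, ⟨(B : ℤ) * k₁, ?_⟩, ⟨(B : ℤ) * k₂ + t, ?_⟩⟩
  · push_cast at hk₁ ⊢; linarith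
  · show y + p.eval x - y₀ = _
    push_cast at hk₂ ⊢; linarith [ht]
end

section
/- Let x₀ = a/b be a rational number in lowest terms (b ≥ 1), n ≥ 1 an integer, N ≥ 1 an integer, and x ∈ ℚ with x − x₀ ∈ b^(n−1)·N·ℤ. Then xⁿ − x₀ⁿ ∈ N·ℤ. -/
theorem stmt_9 (a : ℤ) (b : ℕ) (hb : 1 ≤ b) (hcop : a.natAbs.gcd b = 1)
    (n N : ℕ) (hn : 1 ≤ n) (hN : 1 ≤ N) (x : ℚ)
    (hx : ∃ k : ℤ, x - (a : ℚ) / (b : ℚ) = ((b : ℚ) ^ (n - 1) * (N : ℚ)) * k) :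
    ∃ k : ℤ, x ^ n - ((a : ℚ) / (b : ℚ)) ^ n = (N : ℚ) * k := by
  obtain ⟨k, hk⟩ := hx
  have hb0 : (b : ℚ) ≠ 0 := Nat.cast_ne_zero.mpr (by omega)
  set c : ℤ := a + (b : ℤ) ^ n * N * k with hc
  have hpow : (b : ℚ) ^ (n - 1) * (b : ℚ) = (b : ℚ) ^ n := by
    rw [← pow_succ]; congr 1; omega
  have hxe : x = (c : ℚ) / b := by
    rw [eq_div_iff hb0]
    have hk' : x = (a : ℚ) / b + (b : ℚ) ^ (n - 1) * N * k := by linarith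
    rw [hk']
    push_cast [hc]
    field_simp
    linear_combination (N : ℚ) * (k : ℚ) * hpow
  have hgeom : (∑ i ∈ Finset.range n, c ^ i * a ^ (n - 1 - i)) * (c - a) = c ^ n - a ^ n :=
    geom_sum₂_mul c a n
  refine ⟨k * ∑ i ∈ Finset.range n, c ^ i * a ^ (n - 1 - i), ?_⟩
  rw [hxe, div_pow, div_pow, div_sub_div_same]
  rw [div_eq_iff (pow_ne_zero n hb0)]
  have hgeomQ : ((∑ i ∈ Finset.range n, c ^ i * a ^ (n - 1 - i) : ℤ) : ℚ) * ((c : ℚ) - a) =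
      (c : ℚ) ^ n - (a : ℚ) ^ n := by exact_mod_cast hgeom
  have hca : (c : ℚ) - a = (b : ℚ) ^ n * N * k := by push_cast [hc]; ring
  push_cast at hgeomQ ⊢
  linear_combination -hgeomQ + (∑ i ∈ Finset.range n, (c : ℚ) ^ i * (a : ℚ) ^ (n - 1 - i)) * hca
end

section
/- Let f : ℚ² → ℚ² be given by f(x,y) = (x, y + p(x)) for a rational polynomial p, composed with any finite sequence of maps of the forms (x,y) ↦ (αx, y) (α ∈ ℚ, α ≠ 0), (x,y) ↦ (y, x), (x,y) ↦ (x, y + q(x)), (x,y) ↦ (x + r(y), y) with q, r ∈ ℚ[T]. If R ⊆ ℚ² is weakly approximating, then so is f(R). -/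
def Elementary (g : ℚ × ℚ → ℚ × ℚ) : Prop :=
  (∃ α : ℚ, α ≠ 0 ∧ g = fun p => (α * p.1, p.2)) ∨
  (g = fun p => (p.2, p.1)) ∨
  (∃ q : Polynomial ℚ, g = fun p => (p.1, p.2 + Polynomial.eval p.1 q)) ∨
  (∃ r : Polynomial ℚ, g = fun p => (p.1 + Polynomial.eval p.2 r, p.2))

lemma div_mono {N M : ℕ} (h : N ∣ M) {r : ℚ} (hr : ∃ k : ℤ, r = (M : ℚ) * k) :
    ∃ k : ℤ, r = (N : ℚ) * k := by
  obtain ⟨c, rfl⟩ := h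
  obtain ⟨k, hk⟩ := hr
  exact ⟨c * k, by push_cast at hk ⊢; linarith⟩

lemma key (q : Polynomial ℚ) (x₀ : ℚ) (N : ℕ) (hN : 1 ≤ N) :
    ∃ M : ℕ, 1 ≤ M ∧ N ∣ M ∧ ∀ x : ℚ, (∃ k : ℤ, x - x₀ = (M : ℚ) * k) →
      ∃ k : ℤ, q.eval x - q.eval x₀ = (N : ℚ) * k := by
  induction q using Polynomial.induction_on' with
  | add p q hp hq =>
    obtain ⟨M1, hM1, hN1, h1⟩ := hp
    obtain ⟨M2, hM2, hN2, h2⟩ := hq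
    refine ⟨M1 * M2, Nat.one_le_iff_ne_zero.2 (by positivity), dvd_mul_of_dvd_left hN1 _, ?_⟩
    intro x ⟨k, hk⟩
    obtain ⟨j1, hj1⟩ := h1 x ⟨M2 * k, by push_cast at hk ⊢; linarith⟩
    obtain ⟨j2, hj2⟩ := h2 x ⟨M1 * k, by push_cast at hk ⊢; linarith⟩
    refine ⟨j1 + j2, ?_⟩
    simp only [Polynomial.eval_add]
    push_cast
    linarith
  | monomial n c =>
    set v := x₀.den with hvdef
    set b := c.den with hbdef
    set a := c.num with hadef
    have hv0 : (v : ℚ) ≠ 0 := Nat.cast_ne_zero.2 x₀.den_nz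
    refine ⟨N * b * v ^ (n + 1),
      Nat.one_le_iff_ne_zero.2 (by
        have := x₀.den_nz; have := c.den_nz
        simp only [Nat.mul_ne_zero_iff, pow_ne_zero_iff (Nat.succ_ne_zero n)]
        omega), ⟨b * v ^ (n + 1), by ring⟩, ?_⟩
    intro x ⟨k, hk⟩
    push_cast at hk
    -- integer values
    set X₀ : ℤ := x₀.num with hX0def
    set X : ℤ := x₀.num + N * b * v ^ (n + 1) * k * v with hXdef
    obtain ⟨S, hS⟩ : (X - X₀) ∣ X ^ n - X₀ ^ n := sub_dvd_pow_sub_pow X X₀ n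
    have hx0q : (X₀ : ℚ) = x₀ * v := by
      rw [hX0def]
      exact (div_eq_iff hv0).mp (Rat.num_div_den x₀)
    have hxq : (X : ℚ) = x * v := by
      rw [hXdef]; push_cast; rw [hx0q]  -- maybe not; do linear_combination
      nlinarith [hk]
    have hcb : (a : ℚ) = c * b := by
      have hb0 : (b : ℚ) ≠ 0 := Nat.cast_ne_zero.2 c.den_nz
      rw [hadef]
      exact (div_eq_iff hb0).mp (Rat.num_div_den c)
    have hSq : (X : ℚ) ^ n - (X₀ : ℚ) ^ n = ((X : ℚ) - X₀) * S := by exact_mod_cast hS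
    rw [hxq, hx0q] at hSq
    have hXsub : (X : ℚ) - X₀ = (N : ℚ) * b * v ^ (n + 1) * k * v := by
      rw [hXdef, hX0def]; push_cast; ring
    rw [hxq, hx0q] at hXsub
    refine ⟨a * v ^ 2 * k * S, ?_⟩
    simp only [Polynomial.eval_monomial]
    apply mul_left_cancel₀ (pow_ne_zero n hv0)
    push_cast
    linear_combination c * hSq + c * (v : ℚ) * (S : ℚ) *
        (by linarith : x - x₀ = (N : ℚ) * b * v ^ (n + 1) * k) -
      (v : ℚ) ^ (n + 2) * (N : ℚ) * (k : ℚ) * (S : ℚ) * hcb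

lemma elem_pres {g : ℚ × ℚ → ℚ × ℚ} (hg : Elementary g) {R : Set (ℚ × ℚ)}
    (hR : WeakApprox R) : WeakApprox (g '' R) := by
  rcases hg with ⟨α, hα, rfl⟩ | rfl | ⟨q, rfl⟩ | ⟨r, rfl⟩
  · intro x₀ y₀ N hN
    have hd0 : (α.den : ℚ) ≠ 0 := Nat.cast_ne_zero.2 α.den_nz
    have hM : 1 ≤ N * α.den := Nat.one_le_iff_ne_zero.2 (by
      have := α.den_nz; simp only [Nat.mul_ne_zero_iff]; omega)
    obtain ⟨⟨x, y⟩, hmem, ⟨k, hk⟩, ⟨k', hk'⟩⟩ := hR (x₀ / α) y₀ (N * α.den) hM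
    refine ⟨(α * x, y), ⟨(x, y), hmem, rfl⟩, ⟨α.num * k, ?_⟩, ⟨α.den * k', ?_⟩⟩
    · simp only at hk ⊢
      have hnum : (α.num : ℚ) = α * α.den := (div_eq_iff hd0).mp (Rat.num_div_den α)
      have : x = x₀ / α + (N : ℚ) * α.den * k := by push_cast at hk; linarith
      rw [this]
      field_simp
      push_cast
      rw [hnum]
      ring
    · simp only at hk' ⊢
      push_cast at hk' ⊢
      linarith
  · intro x₀ y₀ N hN
    obtain ⟨⟨x, y⟩, hmem, h1, h2⟩ := hR y₀ x₀ N hN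
    exact ⟨(y, x), ⟨(x, y), hmem, rfl⟩, h2, h1⟩
  · intro x₀ y₀ N hN
    obtain ⟨M, hM1, hMd, hMkey⟩ := key q x₀ N hN
    obtain ⟨⟨x, y⟩, hmem, h1, h2⟩ := hR x₀ (y₀ - q.eval x₀) M hM1
    refine ⟨(x, y + q.eval x), ⟨(x, y), hmem, rfl⟩, div_mono hMd h1, ?_⟩
    obtain ⟨j, hj⟩ := hMkey x h1
    obtain ⟨k, hk⟩ := div_mono hMd h2
    refine ⟨k + j, ?_⟩
    simp only at hj hk ⊢
    push_cast
    linarith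
  · intro x₀ y₀ N hN
    obtain ⟨M, hM1, hMd, hMkey⟩ := key r y₀ N hN
    obtain ⟨⟨x, y⟩, hmem, h1, h2⟩ := hR (x₀ - r.eval y₀) y₀ M hM1
    refine ⟨(x + r.eval y, y), ⟨(x, y), hmem, rfl⟩, ?_, div_mono hMd h2⟩
    obtain ⟨j, hj⟩ := hMkey y h2
    obtain ⟨k, hk⟩ := div_mono hMd h1
    refine ⟨k + j, ?_⟩
    simp only at hj hk ⊢
    push_cast
    linarith

lemma foldl_pres (L : List (ℚ × ℚ → ℚ × ℚ)) (hL : ∀ g ∈ L, Elementary g)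
    (acc : ℚ × ℚ → ℚ × ℚ) {R : Set (ℚ × ℚ)} (hacc : WeakApprox (acc '' R)) :
    WeakApprox ((L.foldl (fun acc g => g ∘ acc) acc) '' R) := by
  induction L generalizing acc with
  | nil => simpa using hacc
  | cons g L ih =>
    simp only [List.foldl_cons]
    refine ih (fun g' hg' => hL g' (List.mem_cons_of_mem _ hg')) (g ∘ acc) ?_
    rw [Set.image_comp]
    exact elem_pres (hL g List.mem_cons_self) hacc

theorem stmt_18 (p : Polynomial ℚ) (L : List (ℚ × ℚ → ℚ × ℚ))
    (hL : ∀ g ∈ L, Elementary g)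
    (f : ℚ × ℚ → ℚ × ℚ)
    (hf : f = L.foldl (fun acc g => g ∘ acc)
      (fun q : ℚ × ℚ => (q.1, q.2 + Polynomial.eval q.1 p)))
    (R : Set (ℚ × ℚ)) (hR : WeakApprox R) :
    WeakApprox (f '' R) := by
  subst hf
  apply foldl_pres L hL
  exact elem_pres (Or.inr (Or.inr (Or.inl ⟨p, rfl⟩))) hR
end
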